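/- arXiv:0808.0345 — 3 statements merged into one kernel-verified Lean document; each statement's English description precedes it below -/
import Mathlib

section
/- Let R be a commutative ring with elements q, r ∈ R, let M be an R-module, and let U, D : M → M be R-linear maps satisfying D ∘ U = q • (U ∘ D) + r • id. If x ∈ M satisfies D x = 0, then for all integers 0 ≤ m ≤ n, D^{n-m} (U^n x) = (r^{n-m} · ∏_{k=m+1}^{n} [k]_q) • (U^m x), where [k]_q = 1 + q + ⋯ + q^{k-1}. -/
/-- The `q`-integer `[k]_q = 1 + q + ⋯ + q^{k-1}`. -/
def qInt {R : Type*} [CommRing R] (q : R) (k : ℕ) : R :=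
  ∑ j ∈ Finset.range k, q ^ j

/-- Let `R` be a commutative ring with `q, r ∈ R`, `M` an `R`-module and
`U, D : M → M` `R`-linear maps with `D ∘ U = q • (U ∘ D) + r • id`.  If `D x = 0` then
for all `0 ≤ m ≤ n`,
`D^{n-m} (Uⁿ x) = (r^{n-m} · ∏_{k=m+1}^{n} [k]_q) • (Uᵐ x)`. -/
theorem stmt_3 {R : Type*} [CommRing R] {M : Type*} [AddCommGroup M] [Module R M]
    (q r : R) (U D : M →ₗ[R] M)
    (h : D ∘ₗ U = q • (U ∘ₗ D) + r • (LinearMap.id : M →ₗ[R] M))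
    (x : M) (hx : D x = 0) :
    ∀ m n : ℕ, m ≤ n →
      (D ^ (n - m)) ((U ^ n) x)
        = (r ^ (n - m) * ∏ k ∈ Finset.Icc (m + 1) n, qInt q k) • ((U ^ m) x) := by
  have hDU : ∀ y : M, D (U y) = q • U (D y) + r • y := by
    intro y
    have := congrFun (congrArg (fun f : M →ₗ[R] M => (f : M → M)) h) y
    simpa using this
  have key : ∀ n : ℕ, D ((U ^ n) x) = (r * qInt q n) • ((U ^ (n - 1)) x) := by
    intro n
    induction n with
    | zero => simp [qInt, hx]
    | succ n ih =>
      have h1 : (U ^ (n + 1)) x = U ((U ^ n) x) := by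
        rw [pow_succ']; rfl
      rw [h1, hDU, ih]
      rcases Nat.eq_zero_or_pos n with hn | hn
      · subst hn
        simp [qInt, hx]
      · have h2 : U ((U ^ (n - 1)) x) = (U ^ n) x := by
          have : (U ^ n) = U * U ^ (n - 1) := by
            rw [← pow_succ']
            congr 1
            omega
          rw [this]; rfl
        rw [map_smul, h2]
        have hq : qInt q (n + 1) = 1 + q * qInt q n := by
          simp [qInt, Finset.mul_sum, Finset.sum_range_succ', pow_succ']
          ring
        simp only [Nat.add_sub_cancel, hq, smul_smul]
        rw [← add_smul]
        ring_nf
  intro m n hmn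
  induction n with
  | zero =>
    interval_cases m
    simp
  | succ n ih =>
    rcases Nat.lt_or_ge m (n + 1) with hlt | hge
    · have hmn' : m ≤ n := Nat.lt_succ_iff.mp hlt
      have h1 : n + 1 - m = (n - m) + 1 := by omega
      rw [h1, pow_succ]
      have h2 : ∀ y, (D ^ (n - m) * D) y = (D ^ (n - m)) (D y) := fun y => rfl
      rw [h2, key (n + 1)]
      simp only [Nat.add_sub_cancel, map_smul]
      rw [ih hmn', smul_smul]
      have h3 : Finset.Icc (m + 1) (n + 1) = insert (n + 1) (Finset.Icc (m + 1) n) := by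
        ext k
        simp only [Finset.mem_Icc, Finset.mem_insert]
        omega
      rw [h3, Finset.prod_insert (by simp)]
      rw [pow_succ]
      ring_nf
    · have : m = n + 1 := by omega
      subst this
      simp
end

section
/- Let (Γ, Γ') be a quantized dual graded graph with differential coefficient r over a commutative ring R with distinguished element q, with a unique minimum ∅ (the only vertex of height 0), and with finitely many vertices of each height. Then for every n ≥ 0, ∑_{v : h(v) = n} f_Γ^v · f_{Γ'}^v = r^n · [n]_q!, where [n]_q! = [n]_q [n-1]_q ⋯ [1]_q and [k]_q = 1 + q + ⋯ + q^{k-1}. -/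
open scoped Classical

/-- The `q`-factorial `[n]_q! = [n]_q [n-1]_q ⋯ [1]_q` (with `[0]_q! = 1`). -/
def qFact {R : Type*} [CommRing R] (q : R) (n : ℕ) : R :=
  ∏ k ∈ Finset.range n, qInt q (k + 1)

/-- The path generating function: the (finite) sum, over all sequences
`src = v₀, v₁, …, v_n = v`, of the products `∏_{i=0}^{n-1} m(vᵢ, vᵢ₊₁)` of edge weights. -/
noncomputable def pathGF {R V : Type*} [CommRing R] (m : V → V → R) (src : V) (n : ℕ)
    (v : V) : R :=
  ∑ᶠ p : {p : Fin (n + 1) → V // p 0 = src ∧ p (Fin.last n) = v},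
    ∏ i : Fin n, m (p.1 i.castSucc) (p.1 i.succ)

open Function Set

lemma my_finsum_sigma {ι : Type*} {S : ι → Type*} {M : Type*} [AddCommMonoid M]
    (F : (Σ i, S i) → M) (hF : (Function.support F).Finite) :
    ∑ᶠ x, F x = ∑ᶠ i, ∑ᶠ s, F ⟨i, s⟩ := by
  classical
  set t := hF.toFinset with ht
  have hslice : ∀ i : ι, (Function.support fun s : S i => F ⟨i, s⟩).Finite := by
    intro i
    have : (Function.support fun s : S i => F ⟨i, s⟩) = Sigma.mk i ⁻¹' Function.support F := rfl
    rw [this]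
    exact hF.preimage sigma_mk_injective.injOn
  set I := t.image Sigma.fst with hI
  have houter : (Function.support fun i => ∑ᶠ s, F ⟨i, s⟩) ⊆ ↑I := by
    intro i hi
    by_contra hiI
    apply hi
    apply finsum_eq_zero_of_forall_eq_zero
    intro s
    by_contra hs
    exact hiI (Finset.mem_image.2 ⟨⟨i, s⟩, hF.mem_toFinset.2 hs, rfl⟩)
  rw [finsum_eq_sum_of_support_subset _ houter]
  have hin : ∀ i : ι, (∑ᶠ s, F ⟨i, s⟩) = ∑ s ∈ (hslice i).toFinset, F ⟨i, s⟩ := fun i =>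
    finsum_eq_sum _ (hslice i)
  calc ∑ᶠ x, F x = ∑ x ∈ t, F x := finsum_eq_sum _ hF
    _ = ∑ x ∈ I.sigma fun i => (hslice i).toFinset, F x := by
        apply Finset.sum_subset
        · intro x hx
          rw [Finset.mem_sigma]
          refine ⟨Finset.mem_image.2 ⟨x, hx, rfl⟩, ?_⟩
          rw [Set.Finite.mem_toFinset]
          have : F x ≠ 0 := hF.mem_toFinset.1 hx
          simpa using this
        · intro x _ hx
          by_contra hne
          exact hx (hF.mem_toFinset.2 hne)
    _ = ∑ i ∈ I, ∑ s ∈ (hslice i).toFinset, F ⟨i, s⟩ := Finset.sum_sigma _ _ _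
    _ = ∑ i ∈ I, ∑ᶠ s, F ⟨i, s⟩ := by
        refine Finset.sum_congr rfl fun i _ => (hin i).symm

section aux
variable {R V : Type*} [CommRing R] (h : V → ℕ) (μ : V → V → R) (e : V)

lemma path_heights (hμ : ∀ v w, μ v w ≠ 0 → h w = h v + 1) (he0 : h e = 0)
    {n : ℕ} {v : V} (p : {p : Fin (n + 1) → V // p 0 = e ∧ p (Fin.last n) = v})
    (hp : (∏ i : Fin n, μ (p.1 i.castSucc) (p.1 i.succ)) ≠ 0) :
    ∀ i : Fin (n + 1), h (p.1 i) = (i : ℕ) := by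
  have hfac : ∀ i : Fin n, μ (p.1 i.castSucc) (p.1 i.succ) ≠ 0 := by
    intro i hi
    exact hp (Finset.prod_eq_zero (Finset.mem_univ i) hi)
  have key : ∀ k (hk : k < n + 1), h (p.1 ⟨k, hk⟩) = k := by
    intro k
    induction k with
    | zero => intro hk; have : (⟨0, hk⟩ : Fin (n+1)) = 0 := rfl
              rw [this, p.2.1, he0]
    | succ k ih =>
      intro hk
      have hkn : k < n := by omega
      have h1 := hμ _ _ (hfac ⟨k, hkn⟩)
      have hcs : (⟨k, hkn⟩ : Fin n).castSucc = ⟨k, by omega⟩ := rfl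
      have hss : (⟨k, hkn⟩ : Fin n).succ = ⟨k + 1, hk⟩ := rfl
      rw [hcs, hss] at h1
      rw [h1, ih]
  intro i
  have := key i.1 i.2
  simpa using this

lemma path_support_finite (hμ : ∀ v w, μ v w ≠ 0 → h w = h v + 1) (he0 : h e = 0)
    (hfin : ∀ k : ℕ, {v : V | h v = k}.Finite) (n : ℕ) (v : V) :
    (Function.support (fun p : {p : Fin (n + 1) → V // p 0 = e ∧ p (Fin.last n) = v} =>
      ∏ i : Fin n, μ (p.1 i.castSucc) (p.1 i.succ))).Finite := by
  have hpi : (Set.pi Set.univ fun i : Fin (n + 1) => {v : V | h v = (i : ℕ)}).Finite :=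
    Set.Finite.pi fun i => hfin i
  refine (hpi.preimage (Subtype.val_injective.injOn)).subset ?_
  intro p hp
  simp only [Set.mem_preimage, Set.mem_pi, Set.mem_univ, forall_true_left]
  intro i
  exact path_heights h μ e hμ he0 p hp i

lemma pathGF_zero (v : V) : pathGF μ e 0 v = if v = e then 1 else 0 := by
  unfold pathGF
  by_cases hv : v = e
  · subst hv
    haveI : Unique {p : Fin 1 → V // p 0 = v ∧ p (Fin.last 0) = v} := by
      refine ⟨⟨⟨fun _ => v, rfl, rfl⟩⟩, ?_⟩
      rintro ⟨p, h1, h2⟩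
      apply Subtype.ext
      funext i
      have : i = 0 := Subsingleton.elim _ _
      rw [this]; exact h1
    rw [finsum_unique]
    simp
  · haveI : IsEmpty {p : Fin 1 → V // p 0 = e ∧ p (Fin.last 0) = v} := by
      constructor
      rintro ⟨p, h1, h2⟩
      apply hv
      rw [← h2, show Fin.last 0 = 0 from rfl, h1]
    rw [finsum_of_isEmpty]
    simp [hv]
end aux

section succ
variable {R V : Type*} [CommRing R] (h : V → ℕ) (μ : V → V → R) (e : V)

def sigE (e v : V) (n : ℕ)
    (x : Σ w : V, {p : Fin (n + 1) → V // p 0 = e ∧ p (Fin.last n) = w}) :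
    {p : Fin (n + 2) → V // p 0 = e ∧ p (Fin.last (n + 1)) = v} :=
  ⟨Fin.snoc x.2.1 v, by
      rw [show (0 : Fin (n + 2)) = Fin.castSucc 0 from rfl, Fin.snoc_castSucc]
      exact x.2.2.1, Fin.snoc_last _ _⟩

lemma sigE_bijective (e v : V) (n : ℕ) : Function.Bijective (sigE (V := V) e v n) := by
  constructor
  · rintro ⟨w, p, hp⟩ ⟨w', p', hp'⟩ hxy
    have hpp : Fin.snoc p v = (Fin.snoc p' v : Fin (n + 2) → V) := congrArg Subtype.val hxy
    have hpe : p = p' := by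
      have := congrArg Fin.init hpp
      rwa [Fin.init_snoc, Fin.init_snoc] at this
    subst hpe
    have hw : w = w' := by rw [← hp.2, ← hp'.2]
    subst hw
    rfl
  · rintro ⟨p, h0, hl⟩
    refine ⟨⟨p (Fin.castSucc (Fin.last n)), ⟨Fin.init p, ?_, rfl⟩⟩, ?_⟩
    · show p (Fin.castSucc 0) = e
      exact h0
    · apply Subtype.ext
      show Fin.snoc (Fin.init p) v = p
      rw [← hl, Fin.snoc_init_self]

lemma sigE_prod (μ : V → V → R) (e v : V) (n : ℕ)
    (x : Σ w : V, {p : Fin (n + 1) → V // p 0 = e ∧ p (Fin.last n) = w}) :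
    (∏ i : Fin n, μ (x.2.1 i.castSucc) (x.2.1 i.succ)) * μ x.1 v
      = ∏ i : Fin (n + 1), μ ((sigE e v n x).1 i.castSucc) ((sigE e v n x).1 i.succ) := by
  obtain ⟨w, p, hp0, hpl⟩ := x
  unfold sigE
  dsimp only
  rw [Fin.prod_univ_castSucc]
  congr 1
  · apply Finset.prod_congr rfl
    intro i _
    rw [Fin.succ_castSucc, Fin.snoc_castSucc, Fin.snoc_castSucc]
  · rw [Fin.succ_last, Fin.snoc_castSucc, Fin.snoc_last, hpl]

lemma pathGF_succ (hμ : ∀ v w, μ v w ≠ 0 → h w = h v + 1) (he0 : h e = 0)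
    (hfin : ∀ k : ℕ, {v : V | h v = k}.Finite) (n : ℕ) (v : V) :
    pathGF μ e (n + 1) v = ∑ᶠ w, pathGF μ e n w * μ w v := by
  classical
  have hFfin := path_support_finite h μ e hμ he0 hfin (n + 1) v
  have hGfin : (Function.support fun
      x : Σ w : V, {p : Fin (n + 1) → V // p 0 = e ∧ p (Fin.last n) = w} =>
      (∏ i : Fin n, μ (x.2.1 i.castSucc) (x.2.1 i.succ)) * μ x.1 v).Finite := by
    have hsub : (Function.support fun
        x : Σ w : V, {p : Fin (n + 1) → V // p 0 = e ∧ p (Fin.last n) = w} =>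
        (∏ i : Fin n, μ (x.2.1 i.castSucc) (x.2.1 i.succ)) * μ x.1 v)
        ⊆ sigE e v n ⁻¹' (Function.support fun
          p : {p : Fin (n + 2) → V // p 0 = e ∧ p (Fin.last (n + 1)) = v} =>
          ∏ i : Fin (n + 1), μ (p.1 i.castSucc) (p.1 i.succ)) := by
      intro x hx
      simp only [Set.mem_preimage, Function.mem_support]
      rw [← sigE_prod μ e v n x]
      exact hx
    exact (hFfin.preimage (sigE_bijective e v n).injective.injOn).subset hsub
  have step1 : pathGF μ e (n + 1) v
      = ∑ᶠ x : Σ w : V, {p : Fin (n + 1) → V // p 0 = e ∧ p (Fin.last n) = w},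
          (∏ i : Fin n, μ (x.2.1 i.castSucc) (x.2.1 i.succ)) * μ x.1 v := by
    unfold pathGF
    exact (finsum_eq_of_bijective (sigE e v n) (sigE_bijective e v n)
      (fun x => sigE_prod μ e v n x)).symm
  rw [step1, my_finsum_sigma _ hGfin]
  apply finsum_congr
  intro w
  rw [pathGF]
  dsimp only
  exact (finsum_mul' _ _ (path_support_finite h μ e hμ he0 hfin n w)).symm
end succ

section gfsec
variable {R V : Type*} [CommRing R]

noncomputable def gf (μ : V → V → R) (e : V) : ℕ → V → R
  | 0 => fun v => if v = e then 1 else 0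
  | (k + 1) => fun v => ∑ᶠ w, gf μ e k w * μ w v

lemma gf_zero (μ : V → V → R) (e v : V) : gf μ e 0 v = if v = e then 1 else 0 := by
  rw [gf]

lemma gf_succ (μ : V → V → R) (e : V) (k : ℕ) (v : V) :
    gf μ e (k + 1) v = ∑ᶠ w, gf μ e k w * μ w v := by
  rw [gf]

variable (h : V → ℕ) (μ : V → V → R) (e : V)

lemma gf_grade (hμ : ∀ v w, μ v w ≠ 0 → h w = h v + 1) (he0 : h e = 0) :
    ∀ (k : ℕ) (v : V), gf μ e k v ≠ 0 → h v = k := by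
  intro k
  induction k with
  | zero =>
    intro v hv
    rw [gf] at hv
    by_cases hve : v = e
    · rw [hve]; exact he0
    · simp [hve] at hv
  | succ k ih =>
    intro v hv
    rw [gf] at hv
    have : ∃ w, gf μ e k w * μ w v ≠ 0 := by
      by_contra hc
      push_neg at hc
      exact hv (finsum_eq_zero_of_forall_eq_zero hc)
    obtain ⟨w, hw⟩ := this
    have h1 : gf μ e k w ≠ 0 := fun hz => hw (by rw [hz, zero_mul])
    have h2 : μ w v ≠ 0 := fun hz => hw (by rw [hz, mul_zero])
    rw [hμ w v h2, ih w h1]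

lemma pathGF_eq_gf (hμ : ∀ v w, μ v w ≠ 0 → h w = h v + 1) (he0 : h e = 0)
    (hfin : ∀ k : ℕ, {v : V | h v = k}.Finite) :
    ∀ (k : ℕ) (v : V), pathGF μ e k v = gf μ e k v := by
  intro k
  induction k with
  | zero => intro v; rw [pathGF_zero, gf]
  | succ k ih =>
    intro v
    rw [pathGF_succ h μ e hμ he0 hfin, gf]
    exact finsum_congr fun w => by rw [ih w]
end gfsec

/-- Let `(Γ, Γ')` be a quantized dual graded graph with differential
coefficient `r` over a commutative ring `R` with distinguished element `q`, with a unique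
minimum `∅` (the only vertex of height `0`) and finitely many vertices of each height.
Then for all `n ≥ 0`, `∑_{v : h(v) = n} f_Γ^v · f_{Γ'}^v = rⁿ · [n]_q!`. -/
theorem stmt_4 {R V : Type*} [CommRing R] (q r : R) (h : V → ℕ) (m m' : V → V → R)
    -- weights are supported on edges raising height by one
    (hm : ∀ v w, m v w ≠ 0 → h w = h v + 1)
    (hm' : ∀ v w, m' v w ≠ 0 → h w = h v + 1)
    -- local finiteness of the two graphs
    (hloc : ∀ v : V, {w | m v w ≠ 0 ∨ m w v ≠ 0 ∨ m' v w ≠ 0 ∨ m' w v ≠ 0}.Finite)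
    -- finitely many vertices of each height
    (hfin : ∀ n : ℕ, {v : V | h v = n}.Finite)
    -- the quantized dual graded graph relation `DU - qUD = rI`
    (hdual : ∀ u v : V, h u = h v →
      (∑ᶠ w : V, m u w * m' v w)
        = q * (∑ᶠ x : V, m' x u * m x v) + r * (if u = v then 1 else 0))
    -- `∅` is the unique minimum: the only vertex of height `0`
    (e : V) (he : ∀ v : V, h v = 0 ↔ v = e)
    (n : ℕ) :
    (∑ᶠ v ∈ {v : V | h v = n}, pathGF m e n v * pathGF m' e n v)
      = r ^ n * qFact q n := by
  classical
  have he0 : h e = 0 := (he e).mpr rfl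
  set T : ℕ → Finset V := fun k => (hfin k).toFinset with hT
  have hmemT : ∀ (k : ℕ) (v : V), v ∈ T k ↔ h v = k := by
    intro k v; rw [hT]; exact (hfin k).mem_toFinset
  -- conversion of graded finsums to finite sums
  have hconv : ∀ (f : V → R) (k : ℕ), (∀ v, f v ≠ 0 → h v = k) → ∀ c : V → R,
      (∑ᶠ w, f w * c w) = ∑ w ∈ T k, f w * c w := by
    intro f k hg c
    apply finsum_eq_sum_of_support_subset
    intro w hw
    have hf : f w ≠ 0 := left_ne_zero_of_mul hw
    exact Finset.mem_coe.2 ((hmemT k w).2 (hg w hf))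
  have hconv2 : ∀ (v : V) (c : V → R),
      (∑ᶠ w, c w * m' v w) = ∑ w ∈ (hloc v).toFinset, c w * m' v w := by
    intro v c
    apply finsum_eq_sum_of_support_subset
    intro w hw
    have : m' v w ≠ 0 := right_ne_zero_of_mul hw
    exact Finset.mem_coe.2 ((hloc v).mem_toFinset.2 (Or.inr (Or.inr (Or.inl this))))
  have hconv3 : ∀ (v : V) (c : V → R),
      (∑ᶠ x, c x * m x v) = ∑ x ∈ (hloc v).toFinset, c x * m x v := by
    intro v c
    apply finsum_eq_sum_of_support_subset
    intro x hx
    have : m x v ≠ 0 := right_ne_zero_of_mul hx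
    exact Finset.mem_coe.2 ((hloc v).mem_toFinset.2 (Or.inr (Or.inl this)))
  -- the commutation relation applied to a graded function
  have hcomm : ∀ (k : ℕ) (f : V → R), (∀ v, f v ≠ 0 → h v = k) → ∀ v : V,
      (∑ᶠ w, (∑ᶠ u, f u * m u w) * m' v w)
        = q * (∑ᶠ x, (∑ᶠ w, f w * m' x w) * m x v) + r * f v := by
    intro k f hg v
    have hDU : (∑ᶠ w, (∑ᶠ u, f u * m u w) * m' v w)
        = ∑ u ∈ T k, f u * ∑ᶠ w, m u w * m' v w := by
      calc (∑ᶠ w, (∑ᶠ u, f u * m u w) * m' v w)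
          = ∑ᶠ w, (∑ u ∈ T k, f u * m u w) * m' v w :=
            finsum_congr fun w => by rw [hconv f k hg]
        _ = ∑ w ∈ (hloc v).toFinset, (∑ u ∈ T k, f u * m u w) * m' v w := hconv2 v _
        _ = ∑ w ∈ (hloc v).toFinset, ∑ u ∈ T k, f u * (m u w * m' v w) := by
            refine Finset.sum_congr rfl fun w _ => ?_
            rw [Finset.sum_mul]
            exact Finset.sum_congr rfl fun u _ => by ring
        _ = ∑ u ∈ T k, ∑ w ∈ (hloc v).toFinset, f u * (m u w * m' v w) := Finset.sum_comm
        _ = ∑ u ∈ T k, f u * ∑ w ∈ (hloc v).toFinset, m u w * m' v w := by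
            exact Finset.sum_congr rfl fun u _ => by rw [Finset.mul_sum]
        _ = ∑ u ∈ T k, f u * ∑ᶠ w, m u w * m' v w := by
            refine Finset.sum_congr rfl fun u _ => ?_
            congr 1
            symm
            apply finsum_eq_sum_of_support_subset
            intro w hw
            have : m' v w ≠ 0 := right_ne_zero_of_mul hw
            exact Finset.mem_coe.2 ((hloc v).mem_toFinset.2 (Or.inr (Or.inr (Or.inl this))))
    have hUD : (∑ᶠ x, (∑ᶠ w, f w * m' x w) * m x v)
        = ∑ w ∈ T k, f w * ∑ᶠ x, m' x w * m x v := by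
      calc (∑ᶠ x, (∑ᶠ w, f w * m' x w) * m x v)
          = ∑ᶠ x, (∑ w ∈ T k, f w * m' x w) * m x v :=
            finsum_congr fun x => by rw [hconv f k hg]
        _ = ∑ x ∈ (hloc v).toFinset, (∑ w ∈ T k, f w * m' x w) * m x v := hconv3 v _
        _ = ∑ x ∈ (hloc v).toFinset, ∑ w ∈ T k, f w * (m' x w * m x v) := by
            refine Finset.sum_congr rfl fun x _ => ?_
            rw [Finset.sum_mul]
            exact Finset.sum_congr rfl fun w _ => by ring
        _ = ∑ w ∈ T k, ∑ x ∈ (hloc v).toFinset, f w * (m' x w * m x v) := Finset.sum_comm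
        _ = ∑ w ∈ T k, f w * ∑ x ∈ (hloc v).toFinset, m' x w * m x v := by
            exact Finset.sum_congr rfl fun w _ => by rw [Finset.mul_sum]
        _ = ∑ w ∈ T k, f w * ∑ᶠ x, m' x w * m x v := by
            refine Finset.sum_congr rfl fun w _ => ?_
            congr 1
            symm
            apply finsum_eq_sum_of_support_subset
            intro x hx
            have : m x v ≠ 0 := right_ne_zero_of_mul hx
            exact Finset.mem_coe.2 ((hloc v).mem_toFinset.2 (Or.inr (Or.inl this)))
    by_cases hv : h v = k
    · have hd : ∀ u ∈ T k, (∑ᶠ w, m u w * m' v w)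
          = q * (∑ᶠ x, m' x u * m x v) + r * (if u = v then 1 else 0) := fun u hu =>
        hdual u v (by rw [(hmemT k u).1 hu, hv])
      have h2 : ∑ u ∈ T k, f u * (r * (if u = v then 1 else 0)) = r * f v := by
        rw [Finset.sum_eq_single v]
        · simp [mul_comm]
        · intro u _ hne; simp [hne]
        · intro hvnot; exact absurd ((hmemT k v).2 hv) hvnot
      rw [hDU, hUD]
      calc ∑ u ∈ T k, f u * ∑ᶠ w, m u w * m' v w
          = ∑ u ∈ T k, (q * (f u * ∑ᶠ x, m' x u * m x v)
              + f u * (r * (if u = v then 1 else 0))) :=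
            Finset.sum_congr rfl fun u hu => by rw [hd u hu]; ring
        _ = q * (∑ u ∈ T k, f u * ∑ᶠ x, m' x u * m x v)
              + ∑ u ∈ T k, f u * (r * (if u = v then 1 else 0)) := by
            rw [Finset.sum_add_distrib, Finset.mul_sum]
        _ = q * (∑ w ∈ T k, f w * ∑ᶠ x, m' x w * m x v) + r * f v := by rw [h2]
    · have hDU0 : ∑ u ∈ T k, f u * (∑ᶠ w, m u w * m' v w) = 0 := by
        apply Finset.sum_eq_zero
        intro u hu
        by_cases hf : f u = 0
        · rw [hf, zero_mul]
        · have huk : h u = k := hg u hf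
          have hz : (∑ᶠ w, m u w * m' v w) = 0 := by
            apply finsum_eq_zero_of_forall_eq_zero
            intro w
            by_contra hw
            have h1 := hm u w (left_ne_zero_of_mul hw)
            have h2 := hm' v w (right_ne_zero_of_mul hw)
            omega
          rw [hz, mul_zero]
      have hUD0 : ∑ w ∈ T k, f w * (∑ᶠ x, m' x w * m x v) = 0 := by
        apply Finset.sum_eq_zero
        intro w hw
        by_cases hf : f w = 0
        · rw [hf, zero_mul]
        · have hwk : h w = k := hg w hf
          have hz : (∑ᶠ x, m' x w * m x v) = 0 := by
            apply finsum_eq_zero_of_forall_eq_zero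
            intro x
            by_contra hx
            have h1 := hm' x w (left_ne_zero_of_mul hx)
            have h2 := hm x v (right_ne_zero_of_mul hx)
            omega
          rw [hz, mul_zero]
      have hfv : f v = 0 := by
        by_contra hc; exact hv (hg v hc)
      rw [hDU, hUD, hDU0, hUD0, hfv]
      ring
  -- the q-integer recurrence
  have hqInt : ∀ s : ℕ, qInt q (s + 1) = q * qInt q s + 1 := by
    intro s
    rw [qInt, qInt, Finset.sum_range_succ', Finset.mul_sum]
    simp [pow_succ, mul_comm]
  -- D applied to U^(k+1) ∅
  have hDg : ∀ (k : ℕ) (v : V),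
      (∑ᶠ w, gf m e (k + 1) w * m' v w) = (r * qInt q (k + 1)) * gf m e k v := by
    intro k
    induction k with
    | zero =>
      intro v
      have key := hcomm 0 (gf m e 0) (gf_grade h m e hm he0 0) v
      have hg1 : ∀ w : V, gf m e 1 w = ∑ᶠ u, gf m e 0 u * m u w := fun w => gf_succ m e 0 w
      have hz : ∀ x : V, (∑ᶠ w, gf m e 0 w * m' x w) = 0 := by
        intro x
        apply finsum_eq_zero_of_forall_eq_zero
        intro w
        by_cases hwe : w = e
        · subst hwe
          have : m' x w = 0 := by
            by_contra hc
            have := hm' x w hc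
            omega
          rw [this, mul_zero]
        · simp [gf_zero, hwe]
      rw [finsum_congr fun w => by rw [hg1 w]]
      rw [key]
      rw [finsum_eq_zero_of_forall_eq_zero fun x => by rw [hz x, zero_mul]]
      have : qInt q 1 = 1 := by simp [qInt]
      rw [this]
      ring
    | succ k ih =>
      intro v
      have key := hcomm (k + 1) (gf m e (k + 1)) (gf_grade h m e hm he0 (k + 1)) v
      have hg2 : ∀ w : V, gf m e (k + 2) w = ∑ᶠ u, gf m e (k + 1) u * m u w :=
        fun w => gf_succ m e (k + 1) w
      rw [finsum_congr fun w => by rw [hg2 w]]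
      rw [key]
      have hmid : (∑ᶠ x, (∑ᶠ w, gf m e (k + 1) w * m' x w) * m x v)
          = (r * qInt q (k + 1)) * gf m e (k + 1) v := by
        have hsupp : (Function.support fun x => gf m e k x * m x v).Finite :=
          (hfin k).subset fun x hx => gf_grade h m e hm he0 k x (left_ne_zero_of_mul hx)
        calc (∑ᶠ x, (∑ᶠ w, gf m e (k + 1) w * m' x w) * m x v)
            = ∑ᶠ x, (r * qInt q (k + 1)) * (gf m e k x * m x v) :=
              finsum_congr fun x => by rw [ih x]; ring
          _ = (r * qInt q (k + 1)) * ∑ᶠ x, gf m e k x * m x v :=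
              (mul_finsum' _ _ hsupp).symm
          _ = (r * qInt q (k + 1)) * gf m e (k + 1) v := by
              rw [gf_succ m e k v]
      rw [hmid]
      have := hqInt (k + 1)
      calc q * ((r * qInt q (k + 1)) * gf m e (k + 1) v) + r * gf m e (k + 1) v
          = (r * (q * qInt q (k + 1) + 1)) * gf m e (k + 1) v := by ring
        _ = (r * qInt q (k + 2)) * gf m e (k + 1) v := by rw [← hqInt (k + 1)]
  -- iterated down operator applied to U^n ∅
  set Dit : ℕ → V → R := fun k => Nat.rec (motive := fun _ => V → R) (gf m e n)
    (fun _ fk v => ∑ᶠ w, fk w * m' v w) k with hDit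
  have hDit0 : Dit 0 = gf m e n := rfl
  have hDitS : ∀ (k : ℕ) (v : V), Dit (k + 1) v = ∑ᶠ w, Dit k w * m' v w :=
    fun k v => rfl
  have hDitgrade : ∀ k, k ≤ n → ∀ v, Dit k v ≠ 0 → h v = n - k := by
    intro k
    induction k with
    | zero =>
      intro _ v hv
      rw [hDit0] at hv
      simpa using gf_grade h m e hm he0 n v hv
    | succ k ih =>
      intro hk v hv
      rw [hDitS] at hv
      have : ∃ w, Dit k w * m' v w ≠ 0 := by
        by_contra hc
        push_neg at hc
        exact hv (finsum_eq_zero_of_forall_eq_zero hc)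
      obtain ⟨w, hw⟩ := this
      have h1 := ih (by omega) w (left_ne_zero_of_mul hw)
      have h2 := hm' v w (right_ne_zero_of_mul hw)
      omega
  -- the pairing is preserved by moving D across
  have hpair : ∀ k, k + 1 ≤ n →
      (∑ v ∈ T (n - (k + 1)), Dit (k + 1) v * gf m' e (n - (k + 1)) v)
        = ∑ v ∈ T (n - k), Dit k v * gf m' e (n - k) v := by
    intro k hk
    have hj : n - k = (n - (k + 1)) + 1 := by omega
    set j := n - (k + 1) with hjd
    have hgradek : ∀ w, Dit k w ≠ 0 → h w = j + 1 := by
      intro w hw; rw [hjd, ← hj]; exact hDitgrade k (by omega) w hw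
    calc ∑ v ∈ T j, Dit (k + 1) v * gf m' e j v
        = ∑ v ∈ T j, (∑ w ∈ T (j + 1), Dit k w * m' v w) * gf m' e j v := by
          refine Finset.sum_congr rfl fun v _ => ?_
          rw [hDitS, hconv (Dit k) (j + 1) hgradek (fun w => m' v w)]
      _ = ∑ v ∈ T j, ∑ w ∈ T (j + 1), Dit k w * (gf m' e j v * m' v w) := by
          refine Finset.sum_congr rfl fun v _ => ?_
          rw [Finset.sum_mul]
          exact Finset.sum_congr rfl fun w _ => by ring
      _ = ∑ w ∈ T (j + 1), ∑ v ∈ T j, Dit k w * (gf m' e j v * m' v w) := Finset.sum_comm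
      _ = ∑ w ∈ T (j + 1), Dit k w * ∑ v ∈ T j, gf m' e j v * m' v w := by
          exact Finset.sum_congr rfl fun w _ => by rw [Finset.mul_sum]
      _ = ∑ w ∈ T (j + 1), Dit k w * gf m' e (j + 1) w := by
          refine Finset.sum_congr rfl fun w _ => ?_
          congr 1
          rw [show gf m' e (j + 1) w = ∑ᶠ x, gf m' e j x * m' x w from gf_succ m' e j w]
          exact (hconv (gf m' e j) j (gf_grade h m' e hm' he0 j) (fun x => m' x w)).symm
      _ = ∑ v ∈ T (n - k), Dit k v * gf m' e (n - k) v := by rw [hj]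
  have hinv : ∀ k, k ≤ n →
      (∑ v ∈ T (n - k), Dit k v * gf m' e (n - k) v)
        = ∑ v ∈ T n, gf m e n v * gf m' e n v := by
    intro k
    induction k with
    | zero =>
      intro _
      rw [hDit0, Nat.sub_zero]
    | succ k ih =>
      intro hk
      rw [hpair k hk]
      exact ih (by omega)
  -- the scalar formula for Dit
  have hscal : ∀ k, k ≤ n → ∀ v,
      Dit k v = (∏ i ∈ Finset.range k, (r * qInt q (n - i))) * gf m e (n - k) v := by
    intro k
    induction k with
    | zero => intro _ v; rw [hDit0]; simp
    | succ k ih =>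
      intro hk v
      have hj : n - k = (n - (k + 1)) + 1 := by omega
      have hsupp : (Function.support fun w => gf m e (n - k) w * m' v w).Finite :=
        (hfin (n - k)).subset fun w hw =>
          gf_grade h m e hm he0 (n - k) w (left_ne_zero_of_mul hw)
      rw [hDitS]
      calc (∑ᶠ w, Dit k w * m' v w)
          = ∑ᶠ w, (∏ i ∈ Finset.range k, (r * qInt q (n - i)))
              * (gf m e (n - k) w * m' v w) :=
            finsum_congr fun w => by rw [ih (by omega) w]; ring
        _ = (∏ i ∈ Finset.range k, (r * qInt q (n - i)))
              * ∑ᶠ w, gf m e (n - k) w * m' v w := (mul_finsum' _ _ hsupp).symm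
        _ = (∏ i ∈ Finset.range k, (r * qInt q (n - i)))
              * ((r * qInt q (n - k)) * gf m e (n - (k + 1)) v) := by
            congr 1
            rw [hj] at *
            exact hDg (n - (k + 1)) v
        _ = (∏ i ∈ Finset.range (k + 1), (r * qInt q (n - i)))
              * gf m e (n - (k + 1)) v := by
            rw [Finset.prod_range_succ]; ring
  -- final assembly
  have hT0 : T 0 = {e} := by
    ext v
    rw [Finset.mem_singleton, hmemT]
    exact he v
  rw [finsum_mem_eq_finite_toFinset_sum _ (hfin n)]
  rw [Finset.sum_congr rfl fun v _ => by
    rw [pathGF_eq_gf h m e hm he0 hfin, pathGF_eq_gf h m' e hm' he0 hfin]]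
  rw [show (hfin n).toFinset = T n from rfl, ← hinv n le_rfl, Nat.sub_self, hT0,
    Finset.sum_singleton]
  have hge : gf m' e 0 e = 1 := by rw [gf_zero]; simp
  have hge2 : gf m e 0 e = 1 := by rw [gf_zero]; simp
  rw [hge, mul_one, hscal n le_rfl e, Nat.sub_self, hge2, mul_one]
  rw [Finset.prod_mul_distrib, Finset.prod_const, Finset.card_range]
  congr 1
  rw [qFact, ← Finset.prod_range_reflect (fun j => qInt q (j + 1)) n]
  refine Finset.prod_congr rfl fun i hi => ?_
  have : i < n := Finset.mem_range.1 hi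
  congr 1
  omega
end

section
/- Let (Γ, Γ') be a quantized dual graded graph with differential coefficient r over a commutative ring R with distinguished element q, with a unique minimum ∅ (the only vertex of height 0), and with finitely many vertices of each height. For a vertex w with h(w) = m and an integer n ≥ m, let f(∅ → v → w) denote the weight generating function of pairs consisting of a path from ∅ up to v in Γ followed by a path from v down to w in Γ'. Then ∑_{v : h(v) = n} f(∅ → v → w) = r^{n-m} · ([n]_q [n-1]_q ⋯ [m+1]_q) · f_Γ^w. -/
open scoped Classical

/-- The up-down path generating function `f(∅ → v → w)`: the sum over pairs consisting of
a path `∅ = v₀, …, v_n = v` going up in `Γ` (with weights `m(vᵢ, vᵢ₊₁)`), and a path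
`w = u_m, …, u_n = v` going down from `v` to `w` in `Γ'` (with weights `m'(u_{j-1}, u_j)`
for the `Γ'`-edge from `u_{j-1}` up to `u_j`), of the product of all these weights.
Here the down path is recorded as a sequence `u : Fin (n - m + 1) → V` with `u 0 = w`
and `u (n-m) = v`. -/
noncomputable def upDownGF {R V : Type*} [CommRing R] (m m' : V → V → R) (src : V)
    (n nm : ℕ) (v w : V) : R :=
  ∑ᶠ p : {p : Fin (n + 1) → V // p 0 = src ∧ p (Fin.last n) = v},
    ∑ᶠ u : {u : Fin (nm + 1) → V // u 0 = w ∧ u (Fin.last nm) = v},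
      (∏ i : Fin n, m (p.1 i.castSucc) (p.1 i.succ)) *
        ∏ j : Fin nm, m' (u.1 j.castSucc) (u.1 j.succ)

namespace QDGG
variable {R V : Type*} [CommRing R]

/-- Finsupp from a function with finite support. -/
noncomputable def rowF (g : V → R) (hg : (Function.support g).Finite) : V →₀ R :=
  ⟨hg.toFinset, g, fun a => by simp [Function.mem_support]⟩

@[simp] lemma rowF_apply (g : V → R) (hg) (a : V) : rowF g hg a = g a := rfl

/-- Transfer operator associated to a weight matrix with finitely supported rows. -/
noncomputable def Tmat (mw : V → V → R) (hrow : ∀ v, (Function.support (mw v)).Finite) :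
    (V →₀ R) →ₗ[R] (V →₀ R) :=
  Finsupp.lsum R fun v => LinearMap.toSpanSingleton R (V →₀ R) (rowF (mw v) (hrow v))

lemma Top_apply (mw : V → V → R) (hrow) (f : V →₀ R) (u : V) :
    Tmat mw hrow f u = f.sum fun v c => c * mw v u := by
  classical
  simp [Tmat, Finsupp.lsum, Finsupp.sum_apply, LinearMap.toSpanSingleton,
    Finsupp.sum]

end QDGG

namespace QDGG2
open QDGG
variable {R V : Type*} [CommRing R]

/-- Bridge: finsum against a finsupp. -/
lemma finsum_mul_finsupp (f : V →₀ R) (g : V → R) :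
    ∑ᶠ v, f v * g v = f.sum fun v c => c * g v := by
  rw [finsum_eq_sum_of_support_subset _ (s := f.support)
    (fun v hv => Finsupp.mem_support_iff.mpr (fun h0 => by
      simp only [Function.mem_support, h0, zero_mul, ne_eq, not_true] at hv))]
  rfl

lemma top_ne_zero {mw : V → V → R} {hrow} {f : V →₀ R} {u : V}
    (hne : Tmat mw hrow f u ≠ 0) : ∃ x, f x ≠ 0 ∧ mw x u ≠ 0 := by
  rw [Top_apply] at hne
  obtain ⟨x, hx, hx2⟩ := Finset.exists_ne_zero_of_sum_ne_zero hne
  refine ⟨x, Finsupp.mem_support_iff.mp hx, fun h0 => hx2 (by simp [h0])⟩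

/-- Height support predicate. -/
def suppHt (h : V → ℕ) (k : ℕ) (f : V →₀ R) : Prop := ∀ v, f v ≠ 0 → h v = k

lemma suppHt_top {h : V → ℕ} {k k' : ℕ} {mw : V → V → R} {hrow} {f : V →₀ R}
    (hf : suppHt h k f) (hstep : ∀ x u, mw x u ≠ 0 → h x = k → h u = k') :
    suppHt h k' (Tmat mw hrow f) := by
  intro u hu
  obtain ⟨x, hx1, hx2⟩ := top_ne_zero hu
  exact hstep x u hx2 (hf x hx1)

end QDGG2

namespace QDGG3
open QDGG QDGG2
variable {R V : Type*} [CommRing R]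

variable (h : V → ℕ) (mw : V → V → R) (src : V) (n : ℕ) (v : V)

/-- Paths whose i-th vertex has height `h src + i`. -/
def SApaths : Set {p : Fin (n + 1) → V // p 0 = src ∧ p (Fin.last n) = v} :=
  {p | ∀ i : Fin (n + 1), h (p.1 i) = h src + i}

lemma SApaths_finite (hfin : ∀ k : ℕ, {v : V | h v = k}.Finite) :
    (SApaths h src n v).Finite := by
  have hpi : (Set.pi (Set.univ : Set (Fin (n+1))) (fun i => {x : V | h x = h src + i})).Finite :=
    Set.Finite.pi fun i => hfin _
  have : SApaths h src n v =
      (Subtype.val : {p : Fin (n + 1) → V // p 0 = src ∧ p (Fin.last n) = v} → (Fin (n+1) → V))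
        ⁻¹' (Set.pi Set.univ (fun i => {x : V | h x = h src + i})) := by
    ext p
    simp [SApaths, Set.mem_pi]
  rw [this]
  exact Set.Finite.preimage (Subtype.val_injective.injOn) hpi

lemma mem_SApaths (hmw : ∀ a b, mw a b ≠ 0 → h b = h a + 1)
    (p : {p : Fin (n + 1) → V // p 0 = src ∧ p (Fin.last n) = v})
    (hp : (∏ i : Fin n, mw (p.1 i.castSucc) (p.1 i.succ)) ≠ 0) :
    p ∈ SApaths h src n v := by
  have hfac : ∀ i : Fin n, mw (p.1 i.castSucc) (p.1 i.succ) ≠ 0 := by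
    intro i hi
    exact hp (Finset.prod_eq_zero (Finset.mem_univ i) hi)
  intro i
  -- induction on the value of i
  obtain ⟨j, hj⟩ := i
  induction j with
  | zero =>
      simpa using congrArg h p.2.1
  | succ k ih =>
      have hk : k < n + 1 := Nat.lt_of_succ_lt hj
      have hk' : k < n := Nat.succ_lt_succ_iff.mp hj
      have := hmw _ _ (hfac ⟨k, hk'⟩)
      have hcast : ((⟨k, hk'⟩ : Fin n).castSucc : Fin (n+1)) = ⟨k, hk⟩ := rfl
      have hsucc : ((⟨k, hk'⟩ : Fin n).succ : Fin (n+1)) = ⟨k+1, hj⟩ := rfl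
      rw [hcast, hsucc] at this
      rw [this, ih hk]
      simp only [Fin.val_mk]
      omega

lemma path_support_finite (hfin : ∀ k : ℕ, {v : V | h v = k}.Finite)
    (hmw : ∀ a b, mw a b ≠ 0 → h b = h a + 1) :
    (Function.support (fun p : {p : Fin (n + 1) → V // p 0 = src ∧ p (Fin.last n) = v} =>
      ∏ i : Fin n, mw (p.1 i.castSucc) (p.1 i.succ))).Finite :=
  (SApaths_finite h src n v hfin).subset fun p hp => mem_SApaths h mw src n v hmw p hp

lemma pathGF_eq_zero (hmw : ∀ a b, mw a b ≠ 0 → h b = h a + 1)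
    (hv : h v ≠ h src + n) : pathGF mw src n v = 0 := by
  apply finsum_eq_zero_of_forall_eq_zero
  intro p
  by_contra hp
  have := mem_SApaths h mw src n v hmw p hp (Fin.last n)
  rw [p.2.2] at this
  simp [Fin.last] at this
  exact hv this

end QDGG3

namespace QDGG4
open QDGG QDGG2 QDGG3
variable {R V : Type*} [CommRing R]
variable (h : V → ℕ) (mw : V → V → R) (src : V)

lemma pathGF_eq_sum (hfin : ∀ k : ℕ, {v : V | h v = k}.Finite)
    (hmw : ∀ a b, mw a b ≠ 0 → h b = h a + 1) (n : ℕ) (v : V) :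
    pathGF mw src n v = ∑ p ∈ (SApaths_finite h src n v hfin).toFinset,
      ∏ i : Fin n, mw (p.1 i.castSucc) (p.1 i.succ) :=
  finsum_eq_sum_of_support_subset _ (fun p hp => by
    simpa [Set.Finite.mem_toFinset] using mem_SApaths h mw src n v hmw p hp)

lemma pathGF_succ (hfin : ∀ k : ℕ, {v : V | h v = k}.Finite)
    (hmw : ∀ a b, mw a b ≠ 0 → h b = h a + 1) (n : ℕ) (v : V) :
    pathGF mw src (n + 1) v
      = ∑ u ∈ (hfin (h src + n)).toFinset, pathGF mw src n u * mw u v := by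
  by_cases hv : h v = h src + (n + 1)
  · rw [pathGF_eq_sum h mw src hfin hmw (n+1) v]
    have hR : ∀ u ∈ (hfin (h src + n)).toFinset,
        pathGF mw src n u * mw u v
          = ∑ p ∈ (SApaths_finite h src n u hfin).toFinset,
              (∏ i : Fin n, mw (p.1 i.castSucc) (p.1 i.succ)) * mw u v := by
      intro u _
      rw [pathGF_eq_sum h mw src hfin hmw n u, Finset.sum_mul]
    have hsig := Finset.sum_sigma (β := R)
      ((hfin (h src + n)).toFinset)
      (fun u => (SApaths_finite h src n u hfin).toFinset)
      (fun x : Σ u : V, {p' : Fin (n+1) → V // p' 0 = src ∧ p' (Fin.last n) = u} =>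
        (∏ i : Fin n, mw (x.2.1 i.castSucc) (x.2.1 i.succ)) * mw x.1 v)
    rw [Finset.sum_congr rfl hR, ← hsig]
    refine Finset.sum_bij'
      (fun p _ => (⟨p.1 ((Fin.last n).castSucc),
        ⟨p.1 ∘ Fin.castSucc, by simpa using p.2.1, rfl⟩⟩ :
          Σ u : V, {p' : Fin (n+1) → V // p' 0 = src ∧ p' (Fin.last n) = u}))
      (fun x _ => ⟨Fin.snoc x.2.1 v,
        by
          have h0 : (Fin.snoc x.2.1 v : Fin (n+2) → V) (Fin.castSucc 0) = src := by
            rw [Fin.snoc_castSucc]; exact x.2.2.1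
          simpa only [Fin.castSucc_zero] using h0,
        by simp⟩)
      ?_ ?_ ?_ ?_ ?_
    · -- hi : lands in the sigma finset
      intro p hp
      rw [Set.Finite.mem_toFinset] at hp
      rw [Finset.mem_sigma]
      constructor
      · rw [Set.Finite.mem_toFinset]
        have := hp ((Fin.last n).castSucc)
        simp only [Fin.coe_castSucc, Fin.val_last] at this
        exact this
      · rw [Set.Finite.mem_toFinset]
        intro i
        have := hp i.castSucc
        simp only [Fin.coe_castSucc] at this
        exact this
    · -- hj
      intro x hx
      rw [Finset.mem_sigma, Set.Finite.mem_toFinset, Set.Finite.mem_toFinset] at hx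
      rw [Set.Finite.mem_toFinset]
      intro i
      refine Fin.lastCases ?_ ?_ i
      · simp only [Fin.snoc_last, Fin.val_last]
        exact hv
      · intro j
        simp only [Fin.snoc_castSucc, Fin.coe_castSucc]
        exact hx.2 j
    · -- left_inv
      intro p hp
      apply Subtype.ext
      funext i
      refine Fin.lastCases ?_ ?_ i
      · simp only [Fin.snoc_last]
        exact p.2.2.symm
      · intro j
        simp only [Fin.snoc_castSucc, Function.comp_apply]
    · -- right_inv
      intro x hx
      refine Sigma.subtype_ext ?_ ?_
      · simp only [Fin.snoc_castSucc]
        exact x.2.2.2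
      · funext j
        simp only [Function.comp_apply, Fin.snoc_castSucc]
    · -- values
      intro p hp
      show _ = (∏ i : Fin n, mw ((p.1 ∘ Fin.castSucc) i.castSucc) ((p.1 ∘ Fin.castSucc) i.succ))
        * mw (p.1 ((Fin.last n).castSucc)) v
      rw [Fin.prod_univ_castSucc, Fin.succ_last, p.2.2]
      rfl
  · rw [pathGF_eq_zero h mw src (n+1) v hmw hv]
    symm
    apply Finset.sum_eq_zero
    intro u hu
    rw [Set.Finite.mem_toFinset] at hu
    have : mw u v = 0 := by
      by_contra h0
      exact hv (by rw [hmw u v h0, hu.out]; ring)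
    rw [this, mul_zero]

end QDGG4

namespace QDGG5
open QDGG QDGG2 QDGG3 QDGG4
variable {R V : Type*} [CommRing R]

lemma hrow_of_grade (h : V → ℕ) (mw : V → V → R)
    (hfin : ∀ k : ℕ, {v : V | h v = k}.Finite)
    (hmw : ∀ a b, mw a b ≠ 0 → h b = h a + 1) :
    ∀ x, (Function.support (mw x)).Finite := fun x =>
  (hfin (h x + 1)).subset (fun u hu => hmw x u hu)

noncomputable def gvec (mw : V → V → R) (hrow : ∀ x, (Function.support (mw x)).Finite)
    (src : V) (n : ℕ) : V →₀ R :=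
  ((Tmat mw hrow) ^ n) (Finsupp.single src 1)

variable (mw : V → V → R) (hrow : ∀ x, (Function.support (mw x)).Finite) (src : V)

lemma gvec_zero : gvec mw hrow src 0 = Finsupp.single src 1 := by
  simp [gvec]

lemma gvec_succ (n : ℕ) : gvec mw hrow src (n + 1)
    = Tmat mw hrow (gvec mw hrow src n) := by
  rw [gvec, gvec, pow_succ']
  rfl

lemma gvec_suppHt (h : V → ℕ) (hmw : ∀ a b, mw a b ≠ 0 → h b = h a + 1) (n : ℕ) :
    suppHt h (h src + n) (gvec mw hrow src n) := by
  induction n with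
  | zero =>
      intro v hv
      rw [gvec_zero] at hv
      have : v = src := by
        by_contra hne
        rw [Finsupp.single_apply_ne_zero] at hv
        exact hne hv.1
      rw [this]
      rfl
  | succ n ih =>
      rw [gvec_succ]
      exact suppHt_top ih (fun x u hxu hx => by rw [hmw x u hxu, hx]; ring)

lemma pathGF_eq_gvec (h : V → ℕ)
    (hfin : ∀ k : ℕ, {v : V | h v = k}.Finite)
    (hmw : ∀ a b, mw a b ≠ 0 → h b = h a + 1) (n : ℕ) (v : V) :
    pathGF mw src n v = gvec mw hrow src n v := by
  induction n generalizing v with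
  | zero =>
      rw [gvec_zero, Finsupp.single_apply]
      by_cases hv : src = v
      · subst hv
        haveI : Unique {p : Fin 1 → V // p 0 = src ∧ p (Fin.last 0) = src} :=
          ⟨⟨⟨fun _ => src, rfl, rfl⟩⟩, fun p => by
            apply Subtype.ext
            funext i
            have : i = 0 := Subsingleton.elim i 0
            rw [this, p.2.1]
            rfl⟩
        rw [pathGF, finsum_unique]
        simp
      · rw [if_neg hv]
        haveI : IsEmpty {p : Fin 1 → V // p 0 = src ∧ p (Fin.last 0) = v} := by
          constructor
          rintro ⟨p, hp0, hpl⟩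
          exact hv (by rw [← hp0, ← hpl]; rfl)
        rw [pathGF, finsum_of_isEmpty]
  | succ n ih =>
      rw [pathGF_succ h mw src hfin hmw n v, gvec_succ, Top_apply]
      rw [Finsupp.sum]
      have hcong : ∀ u ∈ (hfin (h src + n)).toFinset,
          pathGF mw src n u * mw u v = gvec mw hrow src n u * mw u v :=
        fun u _ => by rw [ih u]
      rw [Finset.sum_congr rfl hcong]
      symm
      apply Finset.sum_subset
      · intro x hx
        rw [Finsupp.mem_support_iff] at hx
        rw [Set.Finite.mem_toFinset]
        exact gvec_suppHt mw hrow src h hmw n x hx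
      · intro x _ hnx
        rw [Finsupp.notMem_support_iff.mp hnx, zero_mul]

end QDGG5

namespace QDGG6
open QDGG QDGG2 QDGG3 QDGG4 QDGG5
variable {R V : Type*} [CommRing R]

lemma Tmat_eq_sum (mw : V → V → R) (hrow) (f : V →₀ R) :
    Tmat mw hrow f = f.sum (fun x c => c • rowF (mw x) (hrow x)) := by
  simp only [Tmat, Finsupp.lsum_apply]
  rfl

lemma comp_Tmat_apply (L : (V →₀ R) →ₗ[R] (V →₀ R)) (mw : V → V → R) (hrow)
    (f : V →₀ R) (u : V) :
    L (Tmat mw hrow f) u = f.sum (fun x c => c * (L (rowF (mw x) (hrow x))) u) := by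
  rw [Tmat_eq_sum, map_finsuppSum, Finsupp.sum_apply]
  apply Finset.sum_congr rfl
  intro x _
  simp only [map_smul, Finsupp.smul_apply, smul_eq_mul]

/-- transfer operator applied to an explicit row, as a finsum. -/
lemma Tmat_rowF_apply' (mw : V → V → R) (hrow) (g : V → R) (hg) (u : V) :
    Tmat mw hrow (rowF g hg) u = ∑ᶠ y, g y * mw y u := by
  rw [Top_apply, ← finsum_mul_finsupp (rowF g hg) (fun y => mw y u)]
  rfl

end QDGG6

namespace QDGG7
open QDGG QDGG2 QDGG3 QDGG4 QDGG5 QDGG6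
variable {R V : Type*} [CommRing R]

lemma hrowD (h : V → ℕ) (mΓ' : V → V → R)
    (hfin : ∀ k : ℕ, {v : V | h v = k}.Finite)
    (hm' : ∀ v w, mΓ' v w ≠ 0 → h w = h v + 1) :
    ∀ v, (Function.support (fun u => mΓ' u v)).Finite := fun v =>
  (hfin (h v - 1)).subset (fun u hu => by
    have := hm' u v hu
    simp only [Set.mem_setOf_eq]
    omega)

variable (q r : R) (h : V → ℕ) (mΓ mΓ' : V → V → R)
  (hm : ∀ v w, mΓ v w ≠ 0 → h w = h v + 1)
  (hm' : ∀ v w, mΓ' v w ≠ 0 → h w = h v + 1)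
  (hfin : ∀ k : ℕ, {v : V | h v = k}.Finite)

lemma comm_DU
    (hdual : ∀ u v : V, h u = h v →
      (∑ᶠ w : V, mΓ u w * mΓ' v w)
        = q * (∑ᶠ x : V, mΓ' x u * mΓ x v) + r * (if u = v then 1 else 0))
    (k : ℕ) (f : V →₀ R) (hf : suppHt h k f) :
    Tmat (fun v u => mΓ' u v) (hrowD h mΓ' hfin hm')
        (Tmat mΓ (hrow_of_grade h mΓ hfin hm) f)
      = q • Tmat mΓ (hrow_of_grade h mΓ hfin hm)
          (Tmat (fun v u => mΓ' u v) (hrowD h mΓ' hfin hm') f) + r • f := by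
  ext u
  by_cases hu : h u = k
  · -- main case
    simp only [comp_Tmat_apply, Tmat_rowF_apply', Finsupp.sum, Finsupp.add_apply,
      Finsupp.smul_apply, smul_eq_mul]
    rw [Finset.mul_sum]
    have hstep : ∀ x ∈ f.support, f x * ∑ᶠ y, mΓ x y * mΓ' u y
        = q * (f x * ∑ᶠ y, mΓ' y x * mΓ y u) + (if x = u then f x * r else 0) := by
      intro x hx
      rw [hdual x u (by rw [hf x (Finsupp.mem_support_iff.mp hx), hu])]
      by_cases hxu : x = u <;> simp [hxu] <;> ring
    rw [Finset.sum_congr rfl hstep, Finset.sum_add_distrib,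
      Finset.sum_ite_eq' f.support u (fun x => f x * r)]
    by_cases hmem : u ∈ f.support
    · rw [if_pos hmem]
      ring
    · rw [if_neg hmem, Finsupp.notMem_support_iff.mp hmem]
      ring
  · -- off-height case : all three terms vanish at u
    have hL : (Tmat (fun v u => mΓ' u v) (hrowD h mΓ' hfin hm')
        (Tmat mΓ (hrow_of_grade h mΓ hfin hm) f)) u = 0 := by
      by_contra h0
      obtain ⟨x, hx1, hx2⟩ := top_ne_zero h0
      obtain ⟨y, hy1, hy2⟩ := top_ne_zero hx1
      have := hm' u x hx2
      have := hm y x hy2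
      have := hf y hy1
      omega
    have hR : (Tmat mΓ (hrow_of_grade h mΓ hfin hm)
        (Tmat (fun v u => mΓ' u v) (hrowD h mΓ' hfin hm') f)) u = 0 := by
      by_contra h0
      obtain ⟨x, hx1, hx2⟩ := top_ne_zero h0
      obtain ⟨y, hy1, hy2⟩ := top_ne_zero hx1
      have := hm x u hx2
      have := hm' x y hy2
      have := hf y hy1
      omega
    have hfu : f u = 0 := by
      by_contra h0
      exact hu (hf u h0)
    rw [hL, Finsupp.add_apply, Finsupp.smul_apply, Finsupp.smul_apply, hR, hfu]
    simp

end QDGG7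

namespace QDGG8
open QDGG QDGG2 QDGG3 QDGG4 QDGG5 QDGG6 QDGG7
variable {R V : Type*} [CommRing R]

lemma qInt_succ (q : R) (k : ℕ) : qInt q (k + 1) = q * qInt q k + 1 := by
  rw [qInt, qInt, geom_sum_succ]

variable (q r : R) (h : V → ℕ) (mΓ mΓ' : V → V → R)
  (hm : ∀ v w, mΓ v w ≠ 0 → h w = h v + 1)
  (hm' : ∀ v w, mΓ' v w ≠ 0 → h w = h v + 1)
  (hfin : ∀ k : ℕ, {v : V | h v = k}.Finite)

lemma Dop_of_suppHt0 (g : V →₀ R) (hg : suppHt h 0 g) :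
    Tmat (fun v u => mΓ' u v) (hrowD h mΓ' hfin hm') g = 0 := by
  ext u
  rw [Finsupp.coe_zero, Pi.zero_apply]
  by_contra h0
  obtain ⟨x, hx1, hx2⟩ := top_ne_zero h0
  have := hm' u x hx2
  have := hg x hx1
  omega

lemma gvec_suppHt' {e : V} (he0 : h e = 0) (n : ℕ) :
    suppHt h n (gvec mΓ (hrow_of_grade h mΓ hfin hm) e n) := by
  have := gvec_suppHt mΓ (hrow_of_grade h mΓ hfin hm) e h hm n
  rwa [he0, zero_add] at this

lemma Dop_gvec_succ
    (hdual : ∀ u v : V, h u = h v →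
      (∑ᶠ w : V, mΓ u w * mΓ' v w)
        = q * (∑ᶠ x : V, mΓ' x u * mΓ x v) + r * (if u = v then 1 else 0))
    {e : V} (he0 : h e = 0) (n : ℕ) :
    Tmat (fun v u => mΓ' u v) (hrowD h mΓ' hfin hm')
        (gvec mΓ (hrow_of_grade h mΓ hfin hm) e (n + 1))
      = (r * qInt q (n + 1)) • gvec mΓ (hrow_of_grade h mΓ hfin hm) e n := by
  induction n with
  | zero =>
      rw [gvec_succ, comm_DU q r h mΓ mΓ' hm hm' hfin hdual 0 _
          (gvec_suppHt' h mΓ hm hfin he0 0),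
        Dop_of_suppHt0 h mΓ' hm' hfin _ (gvec_suppHt' h mΓ hm hfin he0 0),
        map_zero, smul_zero, zero_add]
      have h1 : qInt q 1 = 1 := by simp [qInt]
      rw [h1, mul_one]
  | succ n ih =>
      rw [gvec_succ, comm_DU q r h mΓ mΓ' hm hm' hfin hdual (n + 1) _
          (gvec_suppHt' h mΓ hm hfin he0 (n + 1)), ih,
        map_smul, smul_smul, ← gvec_succ, ← add_smul]
      congr 1
      rw [qInt_succ q (n + 1)]
      ring

lemma Dop_pow_gvec
    (hdual : ∀ u v : V, h u = h v →
      (∑ᶠ w : V, mΓ u w * mΓ' v w)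
        = q * (∑ᶠ x : V, mΓ' x u * mΓ x v) + r * (if u = v then 1 else 0))
    {e : V} (he0 : h e = 0) (n j : ℕ) (hj : j ≤ n) :
    ((Tmat (fun v u => mΓ' u v) (hrowD h mΓ' hfin hm')) ^ j)
        (gvec mΓ (hrow_of_grade h mΓ hfin hm) e n)
      = (r ^ j * ∏ k ∈ Finset.Icc (n - j + 1) n, qInt q k) •
          gvec mΓ (hrow_of_grade h mΓ hfin hm) e (n - j) := by
  induction j with
  | zero =>
      rw [pow_zero, Module.End.one_apply, Nat.sub_zero, pow_zero,
        Finset.Icc_eq_empty (by omega), Finset.prod_empty, mul_one, one_smul]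
  | succ j ih =>
      have hj' : j ≤ n := Nat.le_of_succ_le hj
      rw [pow_succ', Module.End.mul_apply, ih hj', map_smul]
      have hnj : n - j = (n - (j + 1)) + 1 := by omega
      rw [hnj, Dop_gvec_succ q r h mΓ mΓ' hm hm' hfin hdual he0, smul_smul]
      have h1 : n - (j + 1) + 1 = n - j := by omega
      rw [h1]
      congr 1
      have h2 : Finset.Icc (n - j) n = insert (n - j) (Finset.Icc (n - j + 1) n) := by
        rw [← Finset.Ioc_insert_left (by omega : n - j ≤ n)]
        congr 1
        rw [← Finset.Icc_add_one_left_eq_Ioc]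
      rw [h2, Finset.prod_insert (by rw [Finset.mem_Icc]; omega)]
      ring

end QDGG8

namespace QDGG9
open QDGG QDGG2 QDGG3 QDGG4 QDGG5 QDGG6 QDGG7 QDGG8
variable {R V : Type*} [CommRing R]

lemma adj_pair (mw : V → V → R) (hrow : ∀ x, (Function.support (mw x)).Finite)
    (hrowT : ∀ x, (Function.support (fun u => mw u x)).Finite) (f g : V →₀ R) :
    ∑ᶠ x, f x * (Tmat mw hrow g) x
      = ∑ᶠ x, (Tmat (fun v u => mw u v) hrowT f) x * g x := by
  have hL : ∑ᶠ x, f x * (Tmat mw hrow g) x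
      = ∑ x ∈ f.support, ∑ y ∈ g.support, f x * (g y * mw y x) := by
    rw [finsum_mul_finsupp f (fun x => Tmat mw hrow g x), Finsupp.sum]
    apply Finset.sum_congr rfl
    intro x _
    rw [Top_apply, Finsupp.sum, Finset.mul_sum]
  have hR : ∑ᶠ x, (Tmat (fun v u => mw u v) hrowT f) x * g x
      = ∑ y ∈ g.support, ∑ x ∈ f.support, g y * (f x * mw y x) := by
    rw [finsum_congr (fun x => mul_comm ((Tmat (fun v u => mw u v) hrowT f) x) (g x)),
      finsum_mul_finsupp g (fun y => Tmat (fun v u => mw u v) hrowT f y), Finsupp.sum]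
    apply Finset.sum_congr rfl
    intro y _
    rw [Top_apply, Finsupp.sum, Finset.mul_sum]
  rw [hL, hR, Finset.sum_comm]
  apply Finset.sum_congr rfl
  intro y _
  apply Finset.sum_congr rfl
  intro x _
  ring

lemma adj_pow (mw : V → V → R) (hrow : ∀ x, (Function.support (mw x)).Finite)
    (hrowT : ∀ x, (Function.support (fun u => mw u x)).Finite) (j : ℕ) (f g : V →₀ R) :
    ∑ᶠ x, f x * (((Tmat mw hrow) ^ j) g) x
      = ∑ᶠ x, (((Tmat (fun v u => mw u v) hrowT) ^ j) f) x * g x := by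
  induction j generalizing g with
  | zero => simp
  | succ j ih =>
      have h1 : ((Tmat mw hrow) ^ (j + 1)) g = ((Tmat mw hrow) ^ j) (Tmat mw hrow g) := by
        rw [pow_succ, Module.End.mul_apply]
      have h2 : ((Tmat (fun v u => mw u v) hrowT) ^ (j + 1)) f
          = Tmat (fun v u => mw u v) hrowT (((Tmat (fun v u => mw u v) hrowT) ^ j) f) := by
        rw [pow_succ', Module.End.mul_apply]
      rw [h1, ih (Tmat mw hrow g), h2]
      exact adj_pair mw hrow hrowT _ g

lemma eval_single (F : V →₀ R) (w : V) :
    ∑ᶠ x, F x * (Finsupp.single w (1 : R)) x = F w := by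
  rw [finsum_mul_finsupp F (fun x => Finsupp.single w (1 : R) x)]
  rw [Finsupp.sum]
  have : ∀ x ∈ F.support, F x * (Finsupp.single w (1:R)) x
      = if x = w then F x else 0 := by
    intro x _
    rw [Finsupp.single_apply]
    by_cases hx : x = w
    · simp [hx]
    · rw [if_neg (fun hh => hx hh.symm), mul_zero, if_neg hx]
  rw [Finset.sum_congr rfl this, Finset.sum_ite_eq' F.support w F]
  by_cases hm : w ∈ F.support
  · rw [if_pos hm]
  · rw [if_neg hm, Finsupp.notMem_support_iff.mp hm]

end QDGG9

namespace QDGG10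
open QDGG QDGG2 QDGG3 QDGG4 QDGG5 QDGG6 QDGG7 QDGG8 QDGG9
variable {R V : Type*} [CommRing R]

lemma gvec_def (mw : V → V → R) (hrow) (src : V) (n : ℕ) :
    gvec mw hrow src n = ((Tmat mw hrow) ^ n) (Finsupp.single src (1 : R)) := rfl

lemma upDown_factor (h : V → ℕ) (mΓ mΓ' : V → V → R)
    (hm : ∀ v w, mΓ v w ≠ 0 → h w = h v + 1)
    (hm' : ∀ v w, mΓ' v w ≠ 0 → h w = h v + 1)
    (hfin : ∀ k : ℕ, {v : V | h v = k}.Finite)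
    (e : V) (n nm : ℕ) (v w : V) :
    upDownGF mΓ mΓ' e n nm v w = pathGF mΓ e n v * pathGF mΓ' w nm v := by
  rw [upDownGF]
  have hinner : ∀ p : {p : Fin (n+1) → V // p 0 = e ∧ p (Fin.last n) = v},
      (∑ᶠ u : {u : Fin (nm+1) → V // u 0 = w ∧ u (Fin.last nm) = v},
        (∏ i : Fin n, mΓ (p.1 i.castSucc) (p.1 i.succ)) *
          ∏ j : Fin nm, mΓ' (u.1 j.castSucc) (u.1 j.succ))
      = (∏ i : Fin n, mΓ (p.1 i.castSucc) (p.1 i.succ)) * pathGF mΓ' w nm v := by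
    intro p
    rw [pathGF, ← mul_finsum' _ _ (path_support_finite h mΓ' w nm v hfin hm')]
  rw [finsum_congr hinner, pathGF,
    ← finsum_mul' _ _ (path_support_finite h mΓ e n v hfin hm)]
  rfl

theorem stmt_5' {R V : Type*} [CommRing R] (q r : R) (h : V → ℕ) (mΓ mΓ' : V → V → R)
    (hm : ∀ v w, mΓ v w ≠ 0 → h w = h v + 1)
    (hm' : ∀ v w, mΓ' v w ≠ 0 → h w = h v + 1)
    (hloc : ∀ v : V, {w | mΓ v w ≠ 0 ∨ mΓ w v ≠ 0 ∨ mΓ' v w ≠ 0 ∨ mΓ' w v ≠ 0}.Finite)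
    (hfin : ∀ k : ℕ, {v : V | h v = k}.Finite)
    (hdual : ∀ u v : V, h u = h v →
      (∑ᶠ w : V, mΓ u w * mΓ' v w)
        = q * (∑ᶠ x : V, mΓ' x u * mΓ x v) + r * (if u = v then 1 else 0))
    (e : V) (he : ∀ v : V, h v = 0 ↔ v = e)
    (w : V) (m n : ℕ) (hw : h w = m) (hmn : m ≤ n) :
    (∑ᶠ v ∈ {v : V | h v = n}, upDownGF mΓ mΓ' e n (n - m) v w)
      = r ^ (n - m) * (∏ k ∈ Finset.Icc (m + 1) n, qInt q k) * pathGF mΓ e m w := by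
  classical
  have he0 : h e = 0 := (he e).mpr rfl
  have hfac : ∀ v, upDownGF mΓ mΓ' e n (n - m) v w
      = pathGF mΓ e n v * pathGF mΓ' w (n - m) v :=
    fun v => upDown_factor h mΓ mΓ' hm hm' hfin e n (n - m) v w
  have hsupp : Function.support (fun v => upDownGF mΓ mΓ' e n (n - m) v w)
      ⊆ {v : V | h v = n} := by
    intro v hv
    by_contra hvn
    apply hv
    simp only [Set.mem_setOf_eq] at hvn
    show upDownGF mΓ mΓ' e n (n - m) v w = 0
    rw [hfac v, pathGF_eq_zero h mΓ e n v hm (by rw [he0]; omega), zero_mul]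
  rw [finsum_mem_def, Set.indicator_eq_self.mpr hsupp, finsum_congr hfac]
  have hstep : ∀ v, pathGF mΓ e n v * pathGF mΓ' w (n - m) v
      = (gvec mΓ (hrow_of_grade h mΓ hfin hm) e n) v *
          (gvec mΓ' (hrow_of_grade h mΓ' hfin hm') w (n - m)) v := by
    intro v
    rw [pathGF_eq_gvec mΓ (hrow_of_grade h mΓ hfin hm) e h hfin hm n v,
      pathGF_eq_gvec mΓ' (hrow_of_grade h mΓ' hfin hm') w h hfin hm' (n - m) v]
  rw [finsum_congr hstep]
  rw [gvec_def mΓ' (hrow_of_grade h mΓ' hfin hm') w (n - m)]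
  rw [adj_pow mΓ' (hrow_of_grade h mΓ' hfin hm') (hrowD h mΓ' hfin hm') (n - m)
    (gvec mΓ (hrow_of_grade h mΓ hfin hm) e n) (Finsupp.single w 1)]
  rw [eval_single]
  have hD := Dop_pow_gvec q r h mΓ mΓ' hm hm' hfin hdual he0 n (n - m) (by omega)
  have hnm1 : n - (n - m) = m := by omega
  rw [hnm1] at hD
  rw [hD, Finsupp.smul_apply, smul_eq_mul]
  rw [← pathGF_eq_gvec mΓ (hrow_of_grade h mΓ hfin hm) e h hfin hm m w]

end QDGG10

/-- Let `(Γ, Γ')` be a quantized dual graded graph with differential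
coefficient `r` over a commutative ring `R` with distinguished element `q`, with a unique
minimum `∅` and finitely many vertices of each height.  For a vertex `w` of height `m`
and `n ≥ m`, the sum over all `v` of height `n` of the up-down path generating functions
`f(∅ → v → w)` equals `r^{n-m} · ([n]_q [n-1]_q ⋯ [m+1]_q) · f_Γ^w`. -/
theorem stmt_5 {R V : Type*} [CommRing R] (q r : R) (h : V → ℕ) (mΓ mΓ' : V → V → R)
    -- weights are supported on edges raising height by one
    (hm : ∀ v w, mΓ v w ≠ 0 → h w = h v + 1)
    (hm' : ∀ v w, mΓ' v w ≠ 0 → h w = h v + 1)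
    -- local finiteness of the two graphs
    (hloc : ∀ v : V, {w | mΓ v w ≠ 0 ∨ mΓ w v ≠ 0 ∨ mΓ' v w ≠ 0 ∨ mΓ' w v ≠ 0}.Finite)
    -- finitely many vertices of each height
    (hfin : ∀ k : ℕ, {v : V | h v = k}.Finite)
    -- the quantized dual graded graph relation `DU - qUD = rI`
    (hdual : ∀ u v : V, h u = h v →
      (∑ᶠ w : V, mΓ u w * mΓ' v w)
        = q * (∑ᶠ x : V, mΓ' x u * mΓ x v) + r * (if u = v then 1 else 0))
    -- `∅` is the unique minimum: the only vertex of height `0`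
    (e : V) (he : ∀ v : V, h v = 0 ↔ v = e)
    (w : V) (m n : ℕ) (hw : h w = m) (hmn : m ≤ n) :
    (∑ᶠ v ∈ {v : V | h v = n}, upDownGF mΓ mΓ' e n (n - m) v w)
      = r ^ (n - m) * (∏ k ∈ Finset.Icc (m + 1) n, qInt q k) * pathGF mΓ e m w := by
  exact QDGG10.stmt_5' q r h mΓ mΓ' hm hm' hloc hfin hdual e he w m n hw hmn
end
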